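/- Fix L > 0 and Q > 0, and define r(C) = L/C + Q²/(2C²) + (Q²/(2C²))·√(1 + 4LC/Q²) for C > 0. Then r is a convex function of C on (0, ∞). -/

import Mathlib

theorem stmt_2 (L Q : ℝ) (hL : 0 < L) (hQ : 0 < Q) :
    ConvexOn ℝ (Set.Ioi 0)
      (fun C : ℝ => L / C + Q ^ 2 / (2 * C ^ 2)
        + (Q ^ 2 / (2 * C ^ 2)) * Real.sqrt (1 + 4 * L * C / Q ^ 2)) := by
  set s : ℝ → ℝ := fun C => Real.sqrt (Q ^ 2 + 4 * L * C) with hsdef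
  set g : ℝ → ℝ := fun C => L / C + Q ^ 2 / (2 * C ^ 2) + Q * s C / (2 * C ^ 2) with hgdef
  set g1 : ℝ → ℝ := fun C =>
      -(L / C ^ 2) + -(Q ^ 2 / C ^ 3) + (Q * L / (s C * C ^ 2) - Q * s C / C ^ 3) with hg1def
  set g2 : ℝ → ℝ := fun C =>
      2 * L / C ^ 3 + 3 * Q ^ 2 / C ^ 4 +
        ((-(2 * Q * L ^ 2 / (s C ^ 3 * C ^ 2)) - 2 * Q * L / (s C * C ^ 3)) -
          (2 * Q * L / (s C * C ^ 3) - 3 * Q * s C / C ^ 4)) with hg2def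
  -- basic facts at points of Ioi 0
  have hu : ∀ x : ℝ, 0 < x → 0 < Q ^ 2 + 4 * L * x := by
    intro x hx; positivity
  have hs0 : ∀ x : ℝ, 0 < x → 0 < s x := fun x hx => Real.sqrt_pos.2 (hu x hx)
  have hs2 : ∀ x : ℝ, 0 < x → s x ^ 2 = Q ^ 2 + 4 * L * x := fun x hx =>
    Real.sq_sqrt (hu x hx).le
  have hsder : ∀ x : ℝ, 0 < x → HasDerivAt s (4 * L / (2 * s x)) x := by
    intro x hx
    have hinner : HasDerivAt (fun C : ℝ => Q ^ 2 + 4 * L * C) (4 * L) x := by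
      simpa using ((hasDerivAt_id x).const_mul (4 * L)).const_add (Q ^ 2)
    exact hinner.sqrt (hu x hx).ne'
  -- first derivative
  have hder1 : ∀ x : ℝ, 0 < x → HasDerivAt g (g1 x) x := by
    intro x hx
    have hx0 : x ≠ 0 := hx.ne'
    have hs0x := hs0 x hx
    have h1 : HasDerivAt (fun C : ℝ => L / C) (-(L / x ^ 2)) x := by
      have := (hasDerivAt_inv hx0).const_mul L
      refine this.congr_deriv ?_
      field_simp
    have hden : HasDerivAt (fun C : ℝ => 2 * C ^ 2) (2 * (2 * x ^ 1)) x :=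
      (hasDerivAt_pow 2 x).const_mul 2
    have h2 : HasDerivAt (fun C : ℝ => Q ^ 2 / (2 * C ^ 2)) (-(Q ^ 2 / x ^ 3)) x := by
      have := (hasDerivAt_const x (Q ^ 2)).div hden (by positivity)
      refine this.congr_deriv ?_
      field_simp
      ring
    have h3 : HasDerivAt (fun C : ℝ => Q * s C / (2 * C ^ 2))
        (Q * L / (s x * x ^ 2) - Q * s x / x ^ 3) x := by
      have hnum : HasDerivAt (fun C : ℝ => Q * s C) (Q * (4 * L / (2 * s x))) x :=
        (hsder x hx).const_mul Q
      have := hnum.div hden (by positivity)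
      refine this.congr_deriv ?_
      field_simp
      ring
    exact (h1.add h2).add h3
  -- second derivative
  have hder2 : ∀ x : ℝ, 0 < x → HasDerivAt g1 (g2 x) x := by
    intro x hx
    have hx0 : x ≠ 0 := hx.ne'
    have hs0x := hs0 x hx
    have a1 : HasDerivAt (fun C : ℝ => -(L / C ^ 2)) (2 * L / x ^ 3) x := by
      have := ((hasDerivAt_const x L).div (hasDerivAt_pow 2 x) (by positivity)).neg
      refine this.congr_deriv ?_
      field_simp
      ring
    have a2 : HasDerivAt (fun C : ℝ => -(Q ^ 2 / C ^ 3)) (3 * Q ^ 2 / x ^ 4) x := by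
      have := ((hasDerivAt_const x (Q ^ 2)).div (hasDerivAt_pow 3 x) (by positivity)).neg
      refine this.congr_deriv ?_
      field_simp
      ring
    have hD : HasDerivAt (fun C : ℝ => s C * C ^ 2)
        (4 * L / (2 * s x) * x ^ 2 + s x * (2 * x ^ 1)) x :=
      (hsder x hx).mul (hasDerivAt_pow 2 x)
    have a3 : HasDerivAt (fun C : ℝ => Q * L / (s C * C ^ 2))
        (-(2 * Q * L ^ 2 / (s x ^ 3 * x ^ 2)) - 2 * Q * L / (s x * x ^ 3)) x := by
      have := (hasDerivAt_const x (Q * L)).div hD (by positivity)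
      refine this.congr_deriv ?_
      field_simp
      ring
    have a4 : HasDerivAt (fun C : ℝ => Q * s C / C ^ 3)
        (2 * Q * L / (s x * x ^ 3) - 3 * Q * s x / x ^ 4) x := by
      have := ((hsder x hx).const_mul Q).div (hasDerivAt_pow 3 x) (by positivity)
      refine this.congr_deriv ?_
      field_simp
      ring
    exact (a1.add a2).add (a3.sub a4)
  -- nonnegativity of the second derivative
  have hnn : ∀ x : ℝ, 0 < x → 0 ≤ g2 x := by
    intro x hx
    have hs0x := hs0 x hx
    have hs2x := hs2 x hx
    have key : 0 ≤ 3 * s x ^ 4 - 4 * L * s x ^ 2 * x - 2 * L ^ 2 * x ^ 2 := by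
      nlinarith [hs2x, sq_nonneg Q, mul_pos hL hx, sq_nonneg (L * x)]
    have hbr : (-(2 * Q * L ^ 2 / (s x ^ 3 * x ^ 2)) - 2 * Q * L / (s x * x ^ 3)) -
          (2 * Q * L / (s x * x ^ 3) - 3 * Q * s x / x ^ 4)
        = Q * (3 * s x ^ 4 - 4 * L * s x ^ 2 * x - 2 * L ^ 2 * x ^ 2) / (s x ^ 3 * x ^ 4) := by
      field_simp
      ring
    have h1 : 0 ≤ 2 * L / x ^ 3 := by positivity
    have h2 : 0 ≤ 3 * Q ^ 2 / x ^ 4 := by positivity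
    have h3 : 0 ≤ Q * (3 * s x ^ 4 - 4 * L * s x ^ 2 * x - 2 * L ^ 2 * x ^ 2) /
        (s x ^ 3 * x ^ 4) := by
      apply div_nonneg (mul_nonneg hQ.le key)
      positivity
    simp only [hg2def]
    rw [hbr]
    linarith
  -- convexity of g
  have hconv : ConvexOn ℝ (Set.Ioi 0) g := by
    apply convexOn_of_hasDerivWithinAt2_nonneg (convex_Ioi 0) (f' := g1) (f'' := g2)
    · exact fun x hx => (hder1 x hx).continuousAt.continuousWithinAt
    · rw [interior_Ioi]
      exact fun x hx => (hder1 x hx).hasDerivWithinAt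
    · rw [interior_Ioi]
      exact fun x hx => (hder2 x hx).hasDerivWithinAt
    · rw [interior_Ioi]
      exact fun x hx => hnn x hx
  -- the stated function agrees with g on Ioi 0
  have heq : ∀ x : ℝ, x ∈ Set.Ioi (0 : ℝ) →
      L / x + Q ^ 2 / (2 * x ^ 2) + (Q ^ 2 / (2 * x ^ 2)) * Real.sqrt (1 + 4 * L * x / Q ^ 2)
        = g x := by
    intro x hx
    have hx : (0 : ℝ) < x := hx
    have h1 : (1 : ℝ) + 4 * L * x / Q ^ 2 = (Q ^ 2 + 4 * L * x) / Q ^ 2 := by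
      field_simp
    rw [h1, Real.sqrt_div (hu x hx).le, Real.sqrt_sq hQ.le]
    simp only [hgdef, hsdef]
    field_simp
  exact ⟨convex_Ioi 0, fun x hx y hy a b ha hb hab => by
    simp only [smul_eq_mul]
    have hm : a * x + b * y ∈ Set.Ioi (0 : ℝ) := by
      have := (convex_Ioi 0) hx hy ha hb hab
      simpa using this
    rw [heq x hx, heq y hy, heq _ hm]
    have := hconv.2 hx hy ha hb hab
    simpa using this⟩
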